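/- arXiv:2605.08857 — 2 statements merged into one kernel-verified Lean document; each statement's English description precedes it below -/
import Mathlib

section
/- Let (Ω, 𝔽, P) be a probability space, F : ℝ → ℝ, p ∈ (0,1), and ξ ∈ ℝ such that for every ε > 0, F(ξ − ε) < p < F(ξ + ε). For each n let F̂_n : Ω → (ℝ → ℝ) be such that F̂_n(ω) is nondecreasing for every ω, and let Δ_n : Ω → ℝ be random variables with sup_{ρ∈ℝ} |F̂_n(ω)(ρ) − F(ρ)| ≤ Δ_n(ω) for every ω, such that Δ_n → 0 in probability (i.e. for every δ > 0, P(Δ_n > δ) → 0). Define ξ̂_n(ω) = inf{ρ ∈ ℝ : F̂_n(ω)(ρ) ≥ p}. Then ξ̂_n → ξ in probability: for every ε > 0, P(|ξ̂_n − ξ| > ε) → 0 as n → ∞. -/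
open MeasureTheory Filter

/-- Quantile consistency: uniform CDF consistency in probability, combined with the
quantile identification condition `F(ξ − ε) < p < F(ξ + ε)` for all `ε > 0`, yields
convergence in probability of the estimated weighted quantiles
`ξ̂_n = inf {ρ : F̂_n(ρ) ≥ p}` to the target quantile `ξ`. -/
theorem quantile_consistency_in_probability
    {Ω : Type*} [MeasurableSpace Ω] (μ : Measure Ω) [IsProbabilityMeasure μ]
    (F : ℝ → ℝ) (p : ℝ) (hp0 : 0 < p) (hp1 : p < 1) (ξ : ℝ)
    (hid : ∀ ε > (0 : ℝ), F (ξ - ε) < p ∧ p < F (ξ + ε))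
    (Fhat : ℕ → Ω → ℝ → ℝ) (hmono : ∀ n ω, Monotone (Fhat n ω))
    (Δ : ℕ → Ω → ℝ)
    (hbound : ∀ n ω, ∀ ρ : ℝ, |Fhat n ω ρ - F ρ| ≤ Δ n ω)
    (hΔ : ∀ δ > (0 : ℝ), Tendsto (fun n => μ {ω | δ < Δ n ω}) atTop (nhds 0)) :
    ∀ ε > (0 : ℝ),
      Tendsto (fun n => μ {ω | ε < |sInf {ρ : ℝ | p ≤ Fhat n ω ρ} - ξ|})
        atTop (nhds 0) := by
  intro ε hε
  obtain ⟨h1, h2⟩ := hid ε hε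
  set δ : ℝ := min (p - F (ξ - ε)) (F (ξ + ε) - p) with hδdef
  have hδ : 0 < δ := lt_min (by linarith) (by linarith)
  have key : ∀ n, {ω | ε < |sInf {ρ : ℝ | p ≤ Fhat n ω ρ} - ξ|} ⊆ {ω | δ/2 < Δ n ω} := by
    intro n ω hω
    by_contra hc
    simp only [Set.mem_setOf_eq, not_lt] at hc
    apply absurd hω
    simp only [Set.mem_setOf_eq, not_lt]
    set S := {ρ : ℝ | p ≤ Fhat n ω ρ}
    have hb1 := hbound n ω (ξ + ε)
    have hb2 := hbound n ω (ξ - ε)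
    rw [abs_le] at hb1 hb2
    have hmem : ξ + ε ∈ S := by
      have : F (ξ + ε) - p ≥ δ := min_le_right _ _
      simp only [S, Set.mem_setOf_eq]; linarith [hb1.1]
    have hlow : ∀ ρ ∈ S, ξ - ε ≤ ρ := by
      intro ρ hρ
      by_contra hρ'
      push_neg at hρ'
      have hm : Fhat n ω ρ ≤ Fhat n ω (ξ - ε) := hmono n ω hρ'.le
      have : p - F (ξ - ε) ≥ δ := min_le_left _ _
      have : p ≤ Fhat n ω ρ := hρ
      linarith [hb2.2]
    have hne : S.Nonempty := ⟨_, hmem⟩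
    have hbdd : BddBelow S := ⟨ξ - ε, fun ρ hρ => hlow ρ hρ⟩
    have hle : sInf S ≤ ξ + ε := csInf_le hbdd hmem
    have hge : ξ - ε ≤ sInf S := le_csInf hne hlow
    rw [abs_le]; constructor <;> linarith
  have hle : ∀ n, μ {ω | ε < |sInf {ρ : ℝ | p ≤ Fhat n ω ρ} - ξ|} ≤ μ {ω | δ/2 < Δ n ω} :=
    fun n => measure_mono (key n)
  exact tendsto_of_tendsto_of_tendsto_of_le_of_le tendsto_const_nhds
    (hΔ (δ/2) (by linarith)) (fun n => zero_le) hle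
end

section
/- Let (Ω, 𝔽, P) be a probability space, E a real-valued random variable with distribution function F(t) = P(E ≤ t), ξ ∈ ℝ, and p ∈ ℝ with F(ξ) = p and F continuous at ξ. Let Ξ_n : Ω → ℝ be random variables with Ξ_n → ξ in probability (for every ε > 0, P(|Ξ_n − ξ| > ε) → 0 as n → ∞). Then P(E ≤ Ξ_n) → p as n → ∞. -/
open MeasureTheory Filter

/-- Asymptotic coverage: if the estimated quantiles `Ξ_n` converge in probability to the
target quantile `ξ` of the residual distribution function `F(t) = P(E ≤ t)` and `F` is
continuous at `ξ` with `F(ξ) = p`, then `P(E ≤ Ξ_n) → p`. -/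
theorem asymptotic_coverage
    {Ω : Type*} [MeasurableSpace Ω] (μ : Measure Ω) [IsProbabilityMeasure μ]
    (E : Ω → ℝ) (F : ℝ → ℝ)
    (hF : ∀ t : ℝ, F t = (μ {ω | E ω ≤ t}).toReal)
    (ξ p : ℝ) (hFξ : F ξ = p) (hcont : ContinuousAt F ξ)
    (Ξ : ℕ → Ω → ℝ)
    (hΞ : ∀ ε > (0 : ℝ), Tendsto (fun n => μ {ω | ε < |Ξ n ω - ξ|}) atTop (nhds 0)) :
    Tendsto (fun n => (μ {ω | E ω ≤ Ξ n ω}).toReal) atTop (nhds p) := by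
  refine Metric.tendsto_nhds.2 fun δ hδ => ?_
  obtain ⟨ε, hεpos, hεF⟩ := Metric.continuousAt_iff.1 hcont (δ/2) (by linarith)
  have h1 : dist (F (ξ + ε/2)) p < δ/2 := by
    rw [← hFξ]
    apply hεF
    rw [Real.dist_eq]
    rw [show ξ + ε/2 - ξ = ε/2 by ring, abs_of_pos (by linarith)]
    linarith
  have h2 : dist (F (ξ - ε/2)) p < δ/2 := by
    rw [← hFξ]
    apply hεF
    rw [Real.dist_eq]
    rw [show ξ - ε/2 - ξ = -(ε/2) by ring, abs_neg, abs_of_pos (by linarith)]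
    linarith
  have hb : Tendsto (fun n => (μ {ω | ε/2 < |Ξ n ω - ξ|}).toReal) atTop (nhds 0) := by
    have := (ENNReal.tendsto_toReal (a := 0) (by simp)).comp (hΞ (ε/2) (by linarith))
    simpa [Function.comp_def] using this
  have hbev : ∀ᶠ n in atTop, (μ {ω | ε/2 < |Ξ n ω - ξ|}).toReal < δ/2 :=
    hb.eventually_lt_const (by linarith)
  filter_upwards [hbev] with n hn
  set b := (μ {ω | ε/2 < |Ξ n ω - ξ|}).toReal with hbdef
  have hb0 : 0 ≤ b := ENNReal.toReal_nonneg
  have hsub1 : {ω | E ω ≤ Ξ n ω} ⊆ {ω | E ω ≤ ξ + ε/2} ∪ {ω | ε/2 < |Ξ n ω - ξ|} := by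
    intro ω hω
    by_cases h : Ξ n ω ≤ ξ + ε/2
    · exact Or.inl (le_trans hω h)
    · push_neg at h
      have hlt : ε/2 < Ξ n ω - ξ := by linarith
      exact Or.inr (hlt.trans_le (le_abs_self _))
  have hsub2 : {ω | E ω ≤ ξ - ε/2} ⊆ {ω | E ω ≤ Ξ n ω} ∪ {ω | ε/2 < |Ξ n ω - ξ|} := by
    intro ω hω
    by_cases h : ε/2 < |Ξ n ω - ξ|
    · exact Or.inr h
    · push_neg at h
      have := (abs_le.1 h).1
      exact Or.inl (by simp only [Set.mem_setOf_eq] at hω ⊢; linarith)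
  have key1 : (μ {ω | E ω ≤ Ξ n ω}).toReal ≤ F (ξ + ε/2) + b := by
    rw [hF]
    have hm := (measure_mono (μ := μ) hsub1).trans (measure_union_le _ _)
    have ht := ENNReal.toReal_mono
      (ENNReal.add_ne_top.2 ⟨measure_ne_top μ _, measure_ne_top μ _⟩) hm
    rwa [ENNReal.toReal_add (measure_ne_top μ _) (measure_ne_top μ _)] at ht
  have key2 : F (ξ - ε/2) ≤ (μ {ω | E ω ≤ Ξ n ω}).toReal + b := by
    rw [hF]
    have hm := (measure_mono (μ := μ) hsub2).trans (measure_union_le _ _)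
    have ht := ENNReal.toReal_mono
      (ENNReal.add_ne_top.2 ⟨measure_ne_top μ _, measure_ne_top μ _⟩) hm
    rwa [ENNReal.toReal_add (measure_ne_top μ _) (measure_ne_top μ _)] at ht
  rw [Real.dist_eq, abs_lt] at h1 h2 ⊢
  constructor <;> linarith
end
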